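/- Let (T₀,T₁) be a pair of nonzero complex polynomials. Suppose (y₀,y₁) and (ȳ₀,ȳ₁) are pairs of monic complex polynomials, each lying in a (possibly different) population of critical points corresponding to (T₀,T₁). If y₀·ȳ₁ = ȳ₀·y₁ (equivalently, y₀/y₁ = ȳ₀/ȳ₁ as rational functions), then y₀ = ȳ₀ and y₁ = ȳ₁. -/

import Mathlib

open Polynomial

noncomputable section

/-- The Wronskian of two polynomials: `Wr(f,g) = f·g′ − f′·g`. -/
def pWr (f g : ℂ[X]) : ℂ[X] := f * derivative g - derivative f * g

/-- A pair `y = (y₀,y₁)` of nonzero polynomials is fertile with respect to a pair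
`T = (T₀,T₁)` if there exist `ỹ₀, ỹ₁` with `Wr(y₀,ỹ₀) = T₀·y₁²` and `Wr(y₁,ỹ₁) = T₁·y₀²`. -/
def Fertile (T y : ℂ[X] × ℂ[X]) : Prop :=
  y.1 ≠ 0 ∧ y.2 ≠ 0 ∧
  ∃ ty0 ty1 : ℂ[X], pWr y.1 ty0 = T.1 * y.2 ^ 2 ∧ pWr y.2 ty1 = T.2 * y.1 ^ 2

/-- Reproduction in direction 0: replace `(y₀,y₁)` by `(ỹ₀,y₁)` with `Wr(y₀,ỹ₀) = T₀·y₁²`. -/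
def Reprod0 (T y z : ℂ[X] × ℂ[X]) : Prop :=
  z.2 = y.2 ∧ pWr y.1 z.1 = T.1 * y.2 ^ 2

/-- Reproduction in direction 1: replace `(y₀,y₁)` by `(y₀,ỹ₁)` with `Wr(y₁,ỹ₁) = T₁·y₀²`. -/
def Reprod1 (T y z : ℂ[X] × ℂ[X]) : Prop :=
  z.1 = y.1 ∧ pWr y.2 z.2 = T.2 * y.1 ^ 2

/-- Reproduction (in either direction). -/
def Reprod (T y z : ℂ[X] × ℂ[X]) : Prop := Reprod0 T y z ∨ Reprod1 T y z

/-- A pair is super-fertile w.r.t. `T` if every pair obtained from it by a finite (possibly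
empty) sequence of reproductions w.r.t. `T` is fertile w.r.t. `T`. -/
def SuperFertile (T y : ℂ[X] × ℂ[X]) : Prop :=
  ∀ z, Relation.ReflTransGen (Reprod T) y z → Fertile T z

/-- A pair `(y₀,y₁)` is generic w.r.t. `(T₀,T₁)`: `y₀,y₁` squarefree, coprime to each other,
and `yᵢ` coprime with `Tᵢ`. -/
def Generic (T y : ℂ[X] × ℂ[X]) : Prop :=
  Squarefree y.1 ∧ Squarefree y.2 ∧ IsCoprime y.1 y.2 ∧
    IsCoprime y.1 T.1 ∧ IsCoprime y.2 T.2

/-- A pair represents a critical point w.r.t. `T` if it is generic and fertile w.r.t. `T`. -/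
def IsCriticalPt (T y : ℂ[X] × ℂ[X]) : Prop := Generic T y ∧ Fertile T y

/-- A pair lies in a population of critical points corresponding to `T` if it is obtained by a
finite (possibly empty) sequence of reproductions from a pair representing a critical point. -/
def InPopulation (T y : ℂ[X] × ℂ[X]) : Prop :=
  ∃ y₀, IsCriticalPt T y₀ ∧ Relation.ReflTransGen (Reprod T) y₀ y


namespace PopulationProof

lemma exists_decomp (x : ℂ) {f : ℂ[X]} (hf : f ≠ 0) :
    ∃ F : ℂ[X], f = (X - C x) ^ (rootMultiplicity x f) * F ∧ F.eval x ≠ 0 := by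
  set m := rootMultiplicity x f with hm
  obtain ⟨F, hF⟩ := Polynomial.pow_rootMultiplicity_dvd f x
  refine ⟨F, hF, fun h0 => ?_⟩
  obtain ⟨G, hG⟩ := dvd_iff_isRoot.mpr h0
  refine Polynomial.pow_rootMultiplicity_not_dvd hf x ⟨G, ?_⟩
  rw [← hm, hF, hG]; ring

lemma pWr_decomp (x : ℂ) (a b : ℕ) (hab : a ≠ b) (F H : ℂ[X]) :
    pWr ((X - C x) ^ a * F) ((X - C x) ^ b * H) =
      (X - C x) ^ (a + b - 1) *
        (C ((b : ℂ) - (a : ℂ)) * (F * H) +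
          (X - C x) * (F * derivative H - derivative F * H)) := by
  rcases a with _ | a <;> rcases b with _ | b
  · exact absurd rfl hab
  · rw [show 0 + (b + 1) - 1 = b from by omega]
    simp only [pWr, derivative_mul, derivative_pow, derivative_X_sub_C, derivative_X,
      derivative_C, mul_zero, zero_mul, Nat.add_sub_cancel,
      pow_zero, one_mul, mul_one, Nat.cast_add, Nat.cast_one, Nat.cast_zero,
      map_sub, map_add, map_one, map_natCast, sub_zero]
    ring
  · rw [show a + 1 + 0 - 1 = a from by omega]
    simp only [pWr, derivative_mul, derivative_pow, derivative_X_sub_C, derivative_X,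
      derivative_C, mul_zero, zero_mul, Nat.add_sub_cancel,
      pow_zero, one_mul, mul_one, Nat.cast_add, Nat.cast_one, Nat.cast_zero,
      map_sub, map_add, map_one, map_natCast, sub_zero, zero_sub, map_neg]
    ring
  · rw [show a + 1 + (b + 1) - 1 = a + b + 1 from by omega]
    simp only [pWr, derivative_mul, derivative_pow, derivative_X_sub_C, derivative_X,
      derivative_C, mul_zero, zero_mul, Nat.add_sub_cancel,
      mul_one, Nat.cast_add, Nat.cast_one, map_sub, map_add, map_one, map_natCast]
    ring

/-- Local multiplicity of a Wronskian of polynomials with distinct multiplicities at `x`. -/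
lemma rootMult_pWr (x : ℂ) {f h : ℂ[X]} (hf : f ≠ 0) (hh : h ≠ 0)
    (hne : rootMultiplicity x f ≠ rootMultiplicity x h) :
    rootMultiplicity x (pWr f h) + 1 = rootMultiplicity x f + rootMultiplicity x h := by
  obtain ⟨F, hF, hFx⟩ := exists_decomp x hf
  obtain ⟨H, hH, hHx⟩ := exists_decomp x hh
  set a := rootMultiplicity x f with ha
  set b := rootMultiplicity x h with hb
  set G : ℂ[X] := C ((b : ℂ) - (a : ℂ)) * (F * H) +
      (X - C x) * (F * derivative H - derivative F * H) with hG
  have key : pWr f h = (X - C x) ^ (a + b - 1) * G := by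
    rw [hF, hH]; exact pWr_decomp x a b hne F H
  have hGx : G.eval x ≠ 0 := by
    have he : G.eval x = ((b : ℂ) - (a : ℂ)) * (F.eval x * H.eval x) := by
      simp [hG]
    rw [he]
    refine mul_ne_zero (sub_ne_zero.mpr ?_) (mul_ne_zero hFx hHx)
    exact fun hc => hne.symm (Nat.cast_injective hc)
  have hGne : G ≠ 0 := fun h0 => hGx (by rw [h0]; simp)
  have hXne : (X - C x : ℂ[X]) ≠ 0 := X_sub_C_ne_zero x
  have hne0 : (X - C x) ^ (a + b - 1) * G ≠ 0 :=
    mul_ne_zero (pow_ne_zero _ hXne) hGne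
  rw [key, rootMultiplicity_mul hne0, rootMultiplicity_X_sub_C_pow,
    rootMultiplicity_eq_zero (fun hr => hGx hr)]
  omega

/-- The affine-Weyl-invariant quadratic relation on local multiplicities:
`(φ−γ)² = (t₀+1)φ + (t₁+1)γ` at every point `x`. -/
def QQ (T0 T1 f g : ℂ[X]) : Prop :=
  f ≠ 0 ∧ g ≠ 0 ∧ ∀ x : ℂ,
    ((rootMultiplicity x f : ℤ) - rootMultiplicity x g) ^ 2
      = ((rootMultiplicity x T0 : ℤ) + 1) * rootMultiplicity x f
        + ((rootMultiplicity x T1 : ℤ) + 1) * rootMultiplicity x g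

lemma QQ.swap {T0 T1 f g : ℂ[X]} (h : QQ T0 T1 f g) : QQ T1 T0 g f :=
  ⟨h.2.1, h.1, fun x => by linear_combination h.2.2 x⟩

lemma QQ.step {T0 T1 f g h : ℂ[X]} (hT0 : T0 ≠ 0)
    (hq : QQ T0 T1 f g) (heq : pWr f h = T0 * g ^ 2) : QQ T0 T1 h g := by
  obtain ⟨hf, hg, hQ⟩ := hq
  have hrhs : T0 * g ^ 2 ≠ 0 := mul_ne_zero hT0 (pow_ne_zero _ hg)
  have hh : h ≠ 0 := by
    rintro rfl
    rw [show pWr f 0 = 0 from by simp [pWr]] at heq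
    exact hrhs heq.symm
  refine ⟨hh, hg, fun x => ?_⟩
  by_cases hcase : rootMultiplicity x h = rootMultiplicity x f
  · rw [hcase]; exact hQ x
  · have hsum := rootMult_pWr x hf hh (fun hc => hcase hc.symm)
    rw [heq, rootMultiplicity_mul hrhs, pow_two,
      rootMultiplicity_mul (mul_ne_zero hg hg)] at hsum
    have hs : (rootMultiplicity x f : ℤ) + rootMultiplicity x h
        = (rootMultiplicity x T0 : ℤ) + 2 * rootMultiplicity x g + 1 := by
      omega
    linear_combination hQ x +
      ((rootMultiplicity x h : ℤ) - (rootMultiplicity x f : ℤ)) * hs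

lemma QQ.chain {T0 T1 : ℂ[X]} (hT0 : T0 ≠ 0) (hT1 : T1 ≠ 0) {y z : ℂ[X] × ℂ[X]}
    (hyz : Relation.ReflTransGen (Reprod (T0, T1)) y z)
    (hy : QQ T0 T1 y.1 y.2) : QQ T0 T1 z.1 z.2 := by
  induction hyz with
  | refl => exact hy
  | tail hst hr ih =>
    rcases hr with ⟨h2, heq⟩ | ⟨h1, heq⟩
    · rw [h2]; exact ih.step hT0 heq
    · rw [h1]; exact ((ih.swap).step hT1 heq).swap

lemma QQ.of_critical {T0 T1 : ℂ[X]} (hT0 : T0 ≠ 0) (hT1 : T1 ≠ 0) {y : ℂ[X] × ℂ[X]}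
    (h : IsCriticalPt (T0, T1) y) : QQ T0 T1 y.1 y.2 := by
  obtain ⟨⟨hsq1, hsq2, hcop, hcT1, hcT2⟩, hf, hg, -⟩ := h
  refine ⟨hf, hg, fun x => ?_⟩
  have hXu : ¬ IsUnit (X - C x : ℂ[X]) := not_isUnit_X_sub_C x
  have hdvd : ∀ {p : ℂ[X]}, p ≠ 0 → 0 < rootMultiplicity x p → (X - C x) ∣ p := by
    intro p hp hpos
    exact dvd_iff_isRoot.mpr ((rootMultiplicity_pos hp).mp hpos)
  have h1le : rootMultiplicity x y.1 ≤ 1 := by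
    by_contra hc
    refine hXu (hsq1 (X - C x) ?_)
    calc (X - C x) * (X - C x) = (X - C x) ^ 2 := by ring
    _ ∣ (X - C x) ^ (rootMultiplicity x y.1) := pow_dvd_pow _ (by omega)
    _ ∣ y.1 := pow_rootMultiplicity_dvd y.1 x
  have h2le : rootMultiplicity x y.2 ≤ 1 := by
    by_contra hc
    refine hXu (hsq2 (X - C x) ?_)
    calc (X - C x) * (X - C x) = (X - C x) ^ 2 := by ring
    _ ∣ (X - C x) ^ (rootMultiplicity x y.2) := pow_dvd_pow _ (by omega)
    _ ∣ y.2 := pow_rootMultiplicity_dvd y.2 x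
  have hmin : rootMultiplicity x y.1 = 0 ∨ rootMultiplicity x y.2 = 0 := by
    by_contra hc
    push_neg at hc
    exact hXu (hcop.isUnit_of_dvd' (hdvd hf (by omega)) (hdvd hg (by omega)))
  have ht1 : 0 < rootMultiplicity x y.1 → rootMultiplicity x T0 = 0 := by
    intro hpos
    by_contra hc
    exact hXu (hcT1.isUnit_of_dvd' (hdvd hf hpos) (hdvd hT0 (Nat.pos_of_ne_zero hc)))
  have ht2 : 0 < rootMultiplicity x y.2 → rootMultiplicity x T1 = 0 := by
    intro hpos
    by_contra hc
    exact hXu (hcT2.isUnit_of_dvd' (hdvd hg hpos) (hdvd hT1 (Nat.pos_of_ne_zero hc)))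
  interval_cases h1 : rootMultiplicity x y.1 <;>
    interval_cases h2 : rootMultiplicity x y.2 <;> simp_all

lemma monic_eq_of_rootMult {p q : ℂ[X]} (hp : p.Monic) (hq : q.Monic)
    (h : ∀ x : ℂ, rootMultiplicity x p = rootMultiplicity x q) : p = q := by
  classical
  have hr : p.roots = q.roots := by
    ext a
    rw [count_roots, count_roots, h a]
  rw [(IsAlgClosed.splits p).eq_prod_roots_of_monic hp,
    (IsAlgClosed.splits q).eq_prod_roots_of_monic hq, hr]

lemma mult_eq {t0 t1 f g fb gb : ℤ}
    (hd : f + gb = fb + g)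
    (E1 : (f - g) ^ 2 = (t0 + 1) * f + (t1 + 1) * g)
    (E2 : (fb - gb) ^ 2 = (t0 + 1) * fb + (t1 + 1) * gb)
    (ht0 : 0 ≤ t0) (ht1 : 0 ≤ t1) :
    f = fb ∧ g = gb := by
  have hsq : (f - g) ^ 2 = (fb - gb) ^ 2 := by
    rw [show f - g = fb - gb from by linarith]
  have he : f - fb = g - gb := by linarith
  have h3 : (t0 + t1 + 2) * (g - gb) = 0 := by
    linear_combination E2 - E1 + hsq - (t0 + 1) * he
  have h4 : g - gb = 0 := by
    rcases mul_eq_zero.mp h3 with h | h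
    · linarith
    · exact h
  constructor <;> linarith

end PopulationProof

/-- Two pairs of monic polynomials lying in populations of critical points corresponding to
the same `(T₀,T₁)` and having the same ratio `y₀/y₁` coincide. -/
theorem population_ratio_unique (T0 T1 y0 y1 yb0 yb1 : ℂ[X])
    (hT0 : T0 ≠ 0) (hT1 : T1 ≠ 0)
    (hy0 : y0.Monic) (hy1 : y1.Monic) (hyb0 : yb0.Monic) (hyb1 : yb1.Monic)
    (hpop : InPopulation (T0, T1) (y0, y1)) (hpopb : InPopulation (T0, T1) (yb0, yb1))
    (h : y0 * yb1 = yb0 * y1) :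
    y0 = yb0 ∧ y1 = yb1 := by
  obtain ⟨r, hcr, hch⟩ := hpop
  obtain ⟨rb, hcrb, hchb⟩ := hpopb
  have Qy : PopulationProof.QQ T0 T1 y0 y1 :=
    PopulationProof.QQ.chain hT0 hT1 hch
      (PopulationProof.QQ.of_critical hT0 hT1 hcr)
  have Qb : PopulationProof.QQ T0 T1 yb0 yb1 :=
    PopulationProof.QQ.chain hT0 hT1 hchb
      (PopulationProof.QQ.of_critical hT0 hT1 hcrb)
  obtain ⟨hy0ne, hy1ne, hQ1⟩ := Qy
  obtain ⟨hb0ne, hb1ne, hQ2⟩ := Qb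
  have key : ∀ x : ℂ, rootMultiplicity x y0 = rootMultiplicity x yb0 ∧
      rootMultiplicity x y1 = rootMultiplicity x yb1 := by
    intro x
    have hmul : rootMultiplicity x y0 + rootMultiplicity x yb1
        = rootMultiplicity x yb0 + rootMultiplicity x y1 := by
      have h1 := rootMultiplicity_mul (x := x) (mul_ne_zero hy0ne hb1ne)
      have h2 := rootMultiplicity_mul (x := x) (mul_ne_zero hb0ne hy1ne)
      rw [← h1, ← h2, h]
    have := PopulationProof.mult_eq
      (f := (rootMultiplicity x y0 : ℤ)) (g := (rootMultiplicity x y1 : ℤ))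
      (fb := (rootMultiplicity x yb0 : ℤ)) (gb := (rootMultiplicity x yb1 : ℤ))
      (by exact_mod_cast hmul) (hQ1 x) (hQ2 x)
      (Int.natCast_nonneg _) (Int.natCast_nonneg _)
    exact ⟨by exact_mod_cast this.1, by exact_mod_cast this.2⟩
  exact ⟨PopulationProof.monic_eq_of_rootMult hy0 hyb0 (fun x => (key x).1),
    PopulationProof.monic_eq_of_rootMult hy1 hyb1 (fun x => (key x).2)⟩

end
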